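/- Let δ ∈ (0,1), θ' > 0, and p ∈ (0,1). Then the function u ↦ [(1 − pθ'/(u+θ'))^{−1} − 1]·u^{δ−1} is integrable on (0,∞) and ∫_0^∞ [(1 − pθ'/(u+θ'))^{−1} − 1]·u^{δ−1} du = θ'^δ · Γ(δ)·Γ(1−δ) · p·(1−p)^{δ−1}. (This is the analytic core of the formula M_{−1}(θ) = exp(C θ^δ p (1−p)^{δ−1}) for the mean local delay in a Poisson bipolar network with ALOHA, which is finite for every p < 1.) -/

import Mathlib

open Real MeasureTheory

/-- Real beta-type integral: `∫ t in (0,1), t^(δ-1) (1-t)^(-δ) = Γ(δ)Γ(1-δ)`. -/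
lemma real_beta_aux (δ : ℝ) (hδ : δ ∈ Set.Ioo (0:ℝ) 1) :
    IntegrableOn (fun t : ℝ => t ^ (δ - 1) * (1 - t) ^ (-δ)) (Set.Ioo 0 1) ∧
    (∫ t in Set.Ioo (0:ℝ) 1, t ^ (δ - 1) * (1 - t) ^ (-δ)) =
      Real.Gamma δ * Real.Gamma (1 - δ) := by
  obtain ⟨hδ0, hδ1⟩ := hδ
  have hre1 : (0:ℝ) < Complex.re (δ : ℂ) := by simp [hδ0]
  have hre2 : (0:ℝ) < Complex.re ((1 - δ : ℝ) : ℂ) := by simp [hδ1]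
  have hconv := Complex.betaIntegral_convergent (u := (δ:ℂ)) (v := ((1-δ:ℝ):ℂ)) hre1 hre2
  set F : ℝ → ℂ := fun x : ℝ =>
    (x : ℂ) ^ ((δ:ℂ) - 1) * (1 - (x : ℂ)) ^ (((1-δ:ℝ):ℂ) - 1) with hF
  have hIoc : IntegrableOn F (Set.Ioc 0 1) := by
    rw [← intervalIntegrable_iff_integrableOn_Ioc_of_le (by norm_num : (0:ℝ) ≤ 1)]
    exact hconv
  -- pointwise identification with the real integrand on `Ioc 0 1`
  have hpt : ∀ x ∈ Set.Ioc (0:ℝ) 1,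
      F x = ((x ^ (δ - 1) * (1 - x) ^ (-δ) : ℝ) : ℂ) := by
    intro x hx
    have hx0 : (0:ℝ) ≤ x := hx.1.le
    have hx1 : (0:ℝ) ≤ 1 - x := by linarith [hx.2]
    have e1 : ((δ:ℂ) - 1) = ((δ - 1 : ℝ) : ℂ) := by push_cast; ring
    have e2 : (((1-δ:ℝ):ℂ) - 1) = ((-δ : ℝ) : ℂ) := by push_cast; ring
    rw [hF]
    simp only
    rw [e1, e2, ← Complex.ofReal_cpow hx0, ← Complex.ofReal_one, ← Complex.ofReal_sub,
      ← Complex.ofReal_cpow hx1, ← Complex.ofReal_mul]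
  have hIocReal : IntegrableOn (fun x : ℝ => x ^ (δ - 1) * (1 - x) ^ (-δ)) (Set.Ioc 0 1) := by
    have h := (hIoc.congr_fun hpt measurableSet_Ioc).re
    simp at h; exact h
  refine ⟨hIocReal.mono_set Set.Ioo_subset_Ioc_self, ?_⟩
  -- the value of the integral
  have hG : Complex.Gamma (δ:ℂ) * Complex.Gamma ((1-δ:ℝ):ℂ) =
      Complex.betaIntegral (δ:ℂ) ((1-δ:ℝ):ℂ) := by
    have := Complex.Gamma_mul_Gamma_eq_betaIntegral hre1 hre2
    rw [this]
    have : (δ:ℂ) + ((1-δ:ℝ):ℂ) = 1 := by push_cast; ring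
    rw [this, Complex.Gamma_one, one_mul]
  have hB : Complex.betaIntegral (δ:ℂ) ((1-δ:ℝ):ℂ) =
      ((∫ t in Set.Ioo (0:ℝ) 1, t ^ (δ - 1) * (1 - t) ^ (-δ) : ℝ) : ℂ) := by
    rw [Complex.betaIntegral, intervalIntegral.integral_of_le (by norm_num : (0:ℝ) ≤ 1)]
    rw [setIntegral_congr_fun measurableSet_Ioc hpt]
    rw [MeasureTheory.integral_Ioc_eq_integral_Ioo]
    exact integral_ofReal
  have := hG.trans hB
  rw [Complex.Gamma_ofReal, Complex.Gamma_ofReal, ← Complex.ofReal_mul] at this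
  exact_mod_cast this.symm

/-- Key integral `∫_0^∞ u^(δ-1)/(u+a) du = a^(δ-1) Γ(δ)Γ(1-δ)` for `a > 0`. -/
lemma key_aux (δ a : ℝ) (hδ : δ ∈ Set.Ioo (0:ℝ) 1) (ha : 0 < a) :
    IntegrableOn (fun u : ℝ => u ^ (δ - 1) / (u + a)) (Set.Ioi 0) ∧
    (∫ u in Set.Ioi (0:ℝ), u ^ (δ - 1) / (u + a)) =
      a ^ (δ - 1) * (Real.Gamma δ * Real.Gamma (1 - δ)) := by
  obtain ⟨hδ0, hδ1⟩ := hδ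
  set φ : ℝ → ℝ := fun t => a * t / (1 - t) with hφ
  set φ' : ℝ → ℝ := fun t => a / ((1 - t) * (1 - t)) with hφ'
  set g : ℝ → ℝ := fun u => u ^ (δ - 1) / (u + a) with hg
  have himg : φ '' Set.Ioo 0 1 = Set.Ioi 0 := by
    ext y
    simp only [Set.mem_image, Set.mem_Ioi, Set.mem_Ioo]
    constructor
    · rintro ⟨t, ⟨ht0, ht1⟩, rfl⟩
      have : 0 < 1 - t := by linarith
      positivity
    · intro hy
      refine ⟨y / (a + y), ⟨by positivity, ?_⟩, ?_⟩
      · rw [div_lt_one (by positivity)]; linarith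
      · rw [hφ]
        have h1 : (1 : ℝ) - y / (a + y) = a / (a + y) := by
          field_simp
          ring
        simp only
        rw [h1]
        field_simp
  have hderiv : ∀ t ∈ Set.Ioo (0:ℝ) 1, HasDerivWithinAt φ (φ' t) (Set.Ioo 0 1) t := by
    intro t ht
    have h1t : (1:ℝ) - t ≠ 0 := by have := ht.2; intro h; linarith [(sub_eq_zero.mp h).symm]
    have h := ((hasDerivAt_id t).const_mul a).div
      ((hasDerivAt_const t (1:ℝ)).sub (hasDerivAt_id t)) h1t
    have h2 : HasDerivAt φ ((a * 1 * (1 - id t) - a * id t * (0 - 1)) / (1 - id t) ^ 2) t := h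
    have e : (a * 1 * (1 - id t) - a * id t * (0 - 1)) / (1 - id t) ^ 2 = φ' t := by
      simp only [id, hφ']
      rw [div_eq_div_iff (by positivity) (by positivity)]
      ring
    rw [e] at h2
    exact h2.hasDerivWithinAt
  have hinj : Set.InjOn φ (Set.Ioo 0 1) := by
    intro s hs t ht h
    have h1s : (1:ℝ) - s ≠ 0 := by have := hs.2; intro h; linarith [(sub_eq_zero.mp h).symm]
    have h1t : (1:ℝ) - t ≠ 0 := by have := ht.2; intro h; linarith [(sub_eq_zero.mp h).symm]
    rw [hφ] at h
    simp only at h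
    rw [div_eq_div_iff h1s h1t] at h
    have : a * (s - t) = 0 := by nlinarith [h]
    have := mul_eq_zero.mp this
    rcases this with h' | h'
    · exact absurd h' ha.ne'
    · linarith
  have hcongr : ∀ t ∈ Set.Ioo (0:ℝ) 1,
      |φ' t| • g (φ t) = a ^ (δ - 1) * (t ^ (δ - 1) * (1 - t) ^ (-δ)) := by
    intro t ht
    obtain ⟨ht0, ht1⟩ := ht
    have hs : (0:ℝ) < 1 - t := by linarith
    have habs : |φ' t| = a / ((1 - t) * (1 - t)) := by
      rw [hφ']; exact abs_of_pos (by positivity)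
    have e1 : φ t + a = a / (1 - t) := by
      rw [hφ]; field_simp; ring
    have e2 : (φ t) ^ (δ - 1) = a ^ (δ - 1) * t ^ (δ - 1) / (1 - t) ^ (δ - 1) := by
      rw [hφ]
      simp only
      rw [Real.div_rpow (by positivity) hs.le, Real.mul_rpow ha.le ht0.le]
    have eC : (1 - t) ^ (-δ) = (1 - t) / ((1 - t) * (1 - t) * (1 - t) ^ (δ - 1)) := by
      have h2 : (1 - t) ^ (-δ) * (1 - t) ^ (δ - 1) = (1 - t)⁻¹ := by
        rw [← Real.rpow_add hs, show -δ + (δ - 1) = -1 by ring, Real.rpow_neg_one]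
      rw [eq_div_iff (by positivity),
        show (1-t)^(-δ) * ((1-t)*(1-t)*(1-t)^(δ-1)) =
          ((1-t)^(-δ) * (1-t)^(δ-1)) * ((1-t)*(1-t)) by ring, h2]
      field_simp
    rw [smul_eq_mul, habs, hg]
    simp only
    rw [e1, e2, eC]
    have hA : (0:ℝ) < t ^ (δ - 1) := Real.rpow_pos_of_pos ht0 _
    have hB : (0:ℝ) < (1 - t) ^ (δ - 1) := Real.rpow_pos_of_pos hs _
    field_simp
  have hbeta := real_beta_aux δ ⟨hδ0, hδ1⟩
  constructor
  · rw [← himg]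
    rw [integrableOn_image_iff_integrableOn_abs_deriv_smul measurableSet_Ioo hderiv hinj]
    exact MeasureTheory.IntegrableOn.congr_fun (hbeta.1.const_mul (a ^ (δ - 1)))
      (fun t ht => (hcongr t ht).symm) measurableSet_Ioo
  · rw [← himg,
      MeasureTheory.integral_image_eq_integral_abs_deriv_smul measurableSet_Ioo hderiv hinj]
    rw [setIntegral_congr_fun measurableSet_Ioo hcongr, integral_const_mul, hbeta.2]

theorem bipolar_mean_local_delay_integral (δ θ' p : ℝ) (hδ : δ ∈ Set.Ioo (0:ℝ) 1)
    (hθ : 0 < θ') (hp : p ∈ Set.Ioo (0:ℝ) 1) :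
    IntegrableOn
      (fun u : ℝ => ((1 - p * θ' / (u + θ'))⁻¹ - 1) * u ^ (δ - 1)) (Set.Ioi 0) ∧
    (∫ u in Set.Ioi (0:ℝ), ((1 - p * θ' / (u + θ'))⁻¹ - 1) * u ^ (δ - 1)) =
      θ' ^ δ * Real.Gamma δ * Real.Gamma (1 - δ) * (p * (1 - p) ^ (δ - 1)) := by
  obtain ⟨hp0, hp1⟩ := hp
  have ha : (0:ℝ) < (1 - p) * θ' := by
    have : (0:ℝ) < 1 - p := by linarith
    positivity
  have hkey := key_aux δ ((1 - p) * θ') hδ ha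
  have hpt : ∀ u ∈ Set.Ioi (0:ℝ),
      ((1 - p * θ' / (u + θ'))⁻¹ - 1) * u ^ (δ - 1) =
        (p * θ') * (u ^ (δ - 1) / (u + (1 - p) * θ')) := by
    intro u hu
    have hu0 : (0:ℝ) < u := hu
    have h1 : (0:ℝ) < u + θ' := by linarith
    have h2 : (0:ℝ) < u + (1 - p) * θ' := by nlinarith
    have h3 : 1 - p * θ' / (u + θ') = (u + (1 - p) * θ') / (u + θ') := by
      field_simp; ring
    rw [h3, inv_div, div_sub_one h2.ne',
      show u + θ' - (u + (1 - p) * θ') = p * θ' by ring]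
    ring
  constructor
  · exact MeasureTheory.IntegrableOn.congr_fun (hkey.1.const_mul (p * θ'))
      (fun u hu => (hpt u hu).symm) measurableSet_Ioi
  · rw [setIntegral_congr_fun measurableSet_Ioi hpt, integral_const_mul, hkey.2]
    rw [Real.mul_rpow (by linarith) hθ.le]
    rw [show δ = 1 + (δ - 1) by ring, Real.rpow_add hθ, Real.rpow_one]
    ring_nf
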